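/- Let κ_a > κ_e > 0, d, γ, τ > 0, α = e^{-κ_a τ}, β = e^{-κ_e τ}, z = 1-α, w = 1-β, p₁ = -κ_a/(κ_a-κ_e), p₂ = -κ_e/(κ_a-κ_e), p₃ = (κ_a/κ_e)^{p₁}, p₄ = (κ_a/κ_e)^{p₂}. Then the width ℓ(d,τ) = (κ_a d γ/(κ_a-κ_e))[(p₄ - p₃)(w^{p₁}/z^{p₂}) + (z - w)/(z w)] is strictly positive, and lim_{τ→∞} ℓ(d,τ) = (κ_a d γ/(κ_a-κ_e))[(κ_a/κ_e)^{p₂} - (κ_a/κ_e)^{p₁}] > 0. -/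

import Mathlib

theorem therapeutic_range_width (κa κe d γ : ℝ) (h1 : κa > κe) (h2 : κe > 0)
    (hd : 0 < d) (hγ : 0 < γ)
    (p₁ p₂ : ℝ) (hp1 : p₁ = -κa / (κa - κe)) (hp2 : p₂ = -κe / (κa - κe))
    (ℓ : ℝ → ℝ)
    (hℓ : ∀ τ : ℝ, ℓ τ = (κa * d * γ / (κa - κe)) *
      (((κa / κe) ^ p₂ - (κa / κe) ^ p₁) *
          ((1 - Real.exp (-κe * τ)) ^ p₁ / (1 - Real.exp (-κa * τ)) ^ p₂) +
        ((1 - Real.exp (-κa * τ)) - (1 - Real.exp (-κe * τ))) /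
          ((1 - Real.exp (-κa * τ)) * (1 - Real.exp (-κe * τ))))) :
    (∀ τ : ℝ, 0 < τ → 0 < ℓ τ) ∧
    Filter.Tendsto ℓ Filter.atTop
      (nhds ((κa * d * γ / (κa - κe)) * ((κa / κe) ^ p₂ - (κa / κe) ^ p₁))) ∧
    0 < (κa * d * γ / (κa - κe)) * ((κa / κe) ^ p₂ - (κa / κe) ^ p₁) := by
  have hκa : 0 < κa := lt_trans h2 h1
  have hsub : 0 < κa - κe := sub_pos.mpr h1
  have hC : 0 < κa * d * γ / (κa - κe) := by positivity
  have hr : 1 < κa / κe := (one_lt_div h2).mpr h1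
  have hlt : p₁ < p₂ := by
    rw [hp1, hp2]
    rw [div_lt_div_iff₀ hsub hsub]
    nlinarith
  have hA : 0 < (κa / κe) ^ p₂ - (κa / κe) ^ p₁ :=
    sub_pos.mpr ((Real.rpow_lt_rpow_left_iff hr).mpr hlt)
  refine ⟨?_, ?_, mul_pos hC hA⟩
  · intro τ hτ
    rw [hℓ]
    have hα1 : Real.exp (-κa * τ) < 1 := by
      rw [Real.exp_lt_one_iff]; nlinarith
    have hβ1 : Real.exp (-κe * τ) < 1 := by
      rw [Real.exp_lt_one_iff]; nlinarith
    have hαβ : Real.exp (-κa * τ) < Real.exp (-κe * τ) := by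
      apply Real.exp_lt_exp.mpr; nlinarith
    have hz : 0 < 1 - Real.exp (-κa * τ) := by linarith
    have hw : 0 < 1 - Real.exp (-κe * τ) := by linarith
    have hwz : 1 - Real.exp (-κe * τ) < 1 - Real.exp (-κa * τ) := by linarith
    have h1pos : 0 < ((κa / κe) ^ p₂ - (κa / κe) ^ p₁) *
        ((1 - Real.exp (-κe * τ)) ^ p₁ / (1 - Real.exp (-κa * τ)) ^ p₂) :=
      mul_pos hA (div_pos (Real.rpow_pos_of_pos hw _) (Real.rpow_pos_of_pos hz _))
    have h2pos : 0 < ((1 - Real.exp (-κa * τ)) - (1 - Real.exp (-κe * τ))) /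
        ((1 - Real.exp (-κa * τ)) * (1 - Real.exp (-κe * τ))) :=
      div_pos (by linarith) (mul_pos hz hw)
    exact mul_pos hC (by linarith)
  · have hea : Filter.Tendsto (fun τ => Real.exp (-κa * τ)) Filter.atTop (nhds 0) := by
      apply Real.tendsto_exp_atBot.comp
      exact Filter.Tendsto.const_mul_atTop_of_neg (by linarith) Filter.tendsto_id
    have heb : Filter.Tendsto (fun τ => Real.exp (-κe * τ)) Filter.atTop (nhds 0) := by
      apply Real.tendsto_exp_atBot.comp
      exact Filter.Tendsto.const_mul_atTop_of_neg (by linarith) Filter.tendsto_id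
    have hz : Filter.Tendsto (fun τ => 1 - Real.exp (-κa * τ)) Filter.atTop (nhds 1) := by
      simpa using tendsto_const_nhds.sub hea
    have hw : Filter.Tendsto (fun τ => 1 - Real.exp (-κe * τ)) Filter.atTop (nhds 1) := by
      simpa using tendsto_const_nhds.sub heb
    have hwp : Filter.Tendsto (fun τ => (1 - Real.exp (-κe * τ)) ^ p₁)
        Filter.atTop (nhds 1) := by
      have := ((Real.continuousAt_rpow_const 1 p₁ (Or.inl one_ne_zero)).tendsto).comp hw
      simpa [Real.one_rpow, Function.comp_def] using this
    have hzp : Filter.Tendsto (fun τ => (1 - Real.exp (-κa * τ)) ^ p₂)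
        Filter.atTop (nhds 1) := by
      have := ((Real.continuousAt_rpow_const 1 p₂ (Or.inl one_ne_zero)).tendsto).comp hz
      simpa [Real.one_rpow, Function.comp_def] using this
    have key : Filter.Tendsto (fun τ => (κa * d * γ / (κa - κe)) *
      (((κa / κe) ^ p₂ - (κa / κe) ^ p₁) *
          ((1 - Real.exp (-κe * τ)) ^ p₁ / (1 - Real.exp (-κa * τ)) ^ p₂) +
        ((1 - Real.exp (-κa * τ)) - (1 - Real.exp (-κe * τ))) /
          ((1 - Real.exp (-κa * τ)) * (1 - Real.exp (-κe * τ)))))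
        Filter.atTop
        (nhds ((κa * d * γ / (κa - κe)) *
          (((κa / κe) ^ p₂ - (κa / κe) ^ p₁) * (1 / 1) + (1 - 1) / (1 * 1)))) := by
      exact tendsto_const_nhds.mul
        ((tendsto_const_nhds.mul (hwp.div hzp one_ne_zero)).add
          ((hz.sub hw).div (hz.mul hw) (by norm_num)))
    have : ℓ = fun τ => (κa * d * γ / (κa - κe)) *
      (((κa / κe) ^ p₂ - (κa / κe) ^ p₁) *
          ((1 - Real.exp (-κe * τ)) ^ p₁ / (1 - Real.exp (-κa * τ)) ^ p₂) +
        ((1 - Real.exp (-κa * τ)) - (1 - Real.exp (-κe * τ))) /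
          ((1 - Real.exp (-κa * τ)) * (1 - Real.exp (-κe * τ)))) := funext hℓ
    rw [this]
    simpa using key
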